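/- Extremality of the maximal temperature for rectangular tori: for all α > 0 and t > 0, θ₃(e^{-πtα²}) · θ₃(e^{-πtα^{-2}}) ≥ θ₃(e^{-πt})², with equality if and only if α = 1. -/

import Mathlib

noncomputable section

/-- Theta-null `θ₂(q) = ∑_{k∈ℤ} q^{(k+1/2)²}`. -/
def theta2 (q : ℝ) : ℝ := ∑' k : ℤ, q ^ (((k : ℝ) + 1/2)^2)

/-- Theta-null `θ₃(q) = ∑_{k∈ℤ} q^{k²}`. -/
def theta3 (q : ℝ) : ℝ := ∑' k : ℤ, q ^ (k^2)

/-- Theta-null `θ₄(q) = ∑_{k∈ℤ} (-1)^k q^{k²}`. -/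
def theta4 (q : ℝ) : ℝ := ∑' k : ℤ, (-1 : ℝ) ^ k * q ^ (k^2)

/-- Jacobi theta function `θ₃(z,q) = ∑_{k∈ℤ} q^{k²} e^{2πikz}` (real-valued for real z, q∈(0,1)). -/
def jTheta3 (z q : ℝ) : ℝ :=
  (∑' k : ℤ, (q : ℂ) ^ (k^2) * Complex.exp (2 * Real.pi * Complex.I * k * z)).re

/-- Jacobi theta function as a complex number. -/
def jTheta3C (z q : ℝ) : ℂ :=
  ∑' k : ℤ, (q : ℂ) ^ (k^2) * Complex.exp (2 * Real.pi * Complex.I * k * z)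

/-- Gauss hypergeometric series `₂F₁(a,b;c;x)`. -/
def hyp2F1 (a b c x : ℝ) : ℝ :=
  ∑' n : ℕ, ((ascPochhammer ℝ n).eval a * (ascPochhammer ℝ n).eval b /
    (ascPochhammer ℝ n).eval c) * x ^ n / (n.factorial : ℝ)

/-- Borwein cubic theta function `a(q)`. -/
def borA (q : ℝ) : ℝ := ∑' p : ℤ × ℤ, q ^ (p.1^2 + p.1 * p.2 + p.2^2)

/-- Borwein cubic theta function `b(q)` (real-valued). -/
def borB (q : ℝ) : ℝ :=
  (∑' p : ℤ × ℤ, (q : ℂ) ^ (p.1^2 + p.1 * p.2 + p.2^2) *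
    Complex.exp (2 * Real.pi * Complex.I * (((p.1 : ℝ) - (p.2 : ℝ)) / 3))).re

/-- Borwein cubic theta function `c(q)`. -/
def borC (q : ℝ) : ℝ :=
  ∑' p : ℤ × ℤ, q ^ ((((p.1 : ℝ)) + 1/3)^2 + ((p.1 : ℝ) + 1/3) * ((p.2 : ℝ) + 1/3) +
    (((p.2 : ℝ)) + 1/3)^2)

/-- Periodized Gaussian (heat kernel) on the torus ℝ²/(Sℤ²). -/
def heatK (S : Matrix.SpecialLinearGroup (Fin 2) ℝ) (t : ℝ) (z : Fin 2 → ℝ) : ℝ :=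
  (1/t) * ∑' l : Fin 2 → ℤ,
    Real.exp (-(Real.pi / t) *
      (((S : Matrix (Fin 2) (Fin 2) ℝ).mulVec (fun i => (l i : ℝ) + z i) 0)^2 +
       ((S : Matrix (Fin 2) (Fin 2) ℝ).mulVec (fun i => (l i : ℝ) + z i) 1)^2))

end



open Real

namespace Theta3Min

/-- `S j x = ∑_{k∈ℤ} (k²)^j exp(-πxk²)`. -/
noncomputable def S (j : ℕ) (x : ℝ) : ℝ :=
  ∑' k : ℤ, ((k : ℝ) ^ 2) ^ j * Real.exp (-(Real.pi * x * (k : ℝ) ^ 2))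

lemma term_nonneg (j : ℕ) (x : ℝ) (k : ℤ) :
    0 ≤ ((k : ℝ) ^ 2) ^ j * Real.exp (-(Real.pi * x * (k : ℝ) ^ 2)) := by positivity

lemma exp_sq_eq_pow (x : ℝ) (n : ℕ) :
    Real.exp (-(Real.pi * x * (n : ℝ) ^ 2)) = Real.exp (-(Real.pi * x)) ^ (n ^ 2) := by
  rw [← Real.exp_nat_mul]
  congr 1
  push_cast
  ring

lemma summable_S (j : ℕ) {x : ℝ} (hx : 0 < x) :
    Summable (fun k : ℤ => ((k : ℝ) ^ 2) ^ j * Real.exp (-(Real.pi * x * (k : ℝ) ^ 2))) := by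
  set r : ℝ := Real.exp (-(Real.pi * x)) with hr
  have hr0 : 0 ≤ r := (Real.exp_pos _).le
  have hr1 : r < 1 := by
    rw [hr, Real.exp_lt_one_iff]
    have := Real.pi_pos
    nlinarith
  have hnat : Summable (fun n : ℕ => ((n : ℝ) ^ 2) ^ j * Real.exp (-(Real.pi * x * (n : ℝ) ^ 2))) := by
    refine Summable.of_nonneg_of_le (f := fun n : ℕ => (n : ℝ) ^ (2 * j) * r ^ n)
      (fun n => by positivity) (fun n => ?_) ?_
    · 
      rw [exp_sq_eq_pow, ← pow_mul, mul_comm 2 j, mul_comm j 2, pow_mul, ← hr]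
      have h2 : r ^ n ^ 2 ≤ r ^ n :=
        pow_le_pow_of_le_one hr0 hr1.le (Nat.le_self_pow two_ne_zero n)
      have h3 : (0:ℝ) ≤ ((n:ℝ) ^ 2) ^ j := by positivity
      calc ((n:ℝ) ^ 2) ^ j * r ^ n ^ 2 ≤ ((n:ℝ) ^ 2) ^ j * r ^ n :=
            mul_le_mul_of_nonneg_left h2 h3
        _ = (n:ℝ) ^ (2 * j) * r ^ n := by rw [← pow_mul]
      exact le_of_eq (by rw [← pow_mul])
    · simpa using summable_pow_mul_geometric_of_norm_lt_one (2 * j)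
        (r := r) (by rwa [Real.norm_eq_abs, abs_of_nonneg hr0])
  apply Summable.of_nat_of_neg
  · exact_mod_cast hnat
  · refine hnat.congr fun n => ?_
    push_cast
    ring_nf

lemma S_split (j : ℕ) {x : ℝ} (hx : 0 < x) :
    S j x = ((0:ℝ) ^ 2) ^ j * Real.exp (-(Real.pi * x * 0 ^ 2)) +
      2 * ∑' n : ℕ, (((n : ℝ) + 1) ^ 2) ^ j *
        Real.exp (-(Real.pi * x * ((n : ℝ) + 1) ^ 2)) := by
  have hs := summable_S j hx
  have h1 : Summable (fun n : ℕ => (((n:ℤ) : ℝ) ^ 2) ^ j *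
      Real.exp (-(Real.pi * x * ((n:ℤ) : ℝ) ^ 2))) := hs.comp_injective (fun a b => by simp)
  have h2 : Summable (fun n : ℕ => (((-((n:ℤ) + 1)) : ℝ) ^ 2) ^ j *
      Real.exp (-(Real.pi * x * ((-((n:ℤ)+1)) : ℝ) ^ 2))) := by
    have := hs.comp_injective (i := fun n : ℕ => -((n:ℤ) + 1))
      (fun a b h => by simpa using h)
    rw [Function.comp_def] at this
    refine this.congr fun n => ?_
    push_cast; ring
  rw [S, tsum_of_nat_of_neg_add_one (by exact_mod_cast h1) (by exact_mod_cast h2)]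
  rw [Summable.tsum_eq_zero_add (by exact_mod_cast h1)]
  push_cast
  have : (∑' (n : ℕ), ((-((n:ℝ) + 1)) ^ 2) ^ j * Real.exp (-(Real.pi * x * (-((n:ℝ) + 1)) ^ 2)))
      = ∑' (n : ℕ), (((n:ℝ) + 1) ^ 2) ^ j * Real.exp (-(Real.pi * x * ((n:ℝ) + 1) ^ 2)) := by
    congr 1 with n
    ring_nf
  rw [this]
  ring

lemma summable_tail (j : ℕ) {x : ℝ} (hx : 0 < x) :
    Summable (fun n : ℕ => (((n : ℝ) + 1) ^ 2) ^ j *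
      Real.exp (-(Real.pi * x * ((n : ℝ) + 1) ^ 2))) := by
  have hs := summable_S j hx
  have := hs.comp_injective (i := fun n : ℕ => (n:ℤ) + 1)
    (fun a b h => by simpa using h)
  rw [Function.comp_def] at this
  refine this.congr fun n => ?_
  push_cast; ring

lemma exp_20 {x : ℝ} (hx : 1 ≤ x) : Real.exp (-(Real.pi * x)) ≤ 1/20 := by
  have h3 : (20:ℝ) < Real.exp 3 := by
    have : Real.exp 3 = (Real.exp 1) ^ (3:ℕ) := by
      rw [← Real.exp_nat_mul]; norm_num
    rw [this]
    have h1 : (2.7182818283:ℝ)^3 ≤ (Real.exp 1)^3 :=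
      pow_le_pow_left₀ (by norm_num) Real.exp_one_gt_d9.le 3
    norm_num at h1 ⊢
    linarith
  have hpi : (3:ℝ) ≤ Real.pi * x := by nlinarith [Real.pi_gt_three]
  have h4 : (20:ℝ) ≤ Real.exp (Real.pi * x) :=
    le_trans h3.le (Real.exp_le_exp.mpr hpi)
  rw [Real.exp_neg, one_div]
  exact inv_anti₀ (by norm_num) h4

lemma sq_le_geom (n : ℕ) : ((n:ℝ)+2)^2 ≤ 9 * 4^n := by
  induction n with
  | zero => norm_num
  | succ m ih =>
    push_cast
    have : ((m:ℝ)+1+2)^2 ≤ 4 * ((m:ℝ)+2)^2 := by nlinarith [Nat.cast_nonneg (α := ℝ) m]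
    calc ((m:ℝ)+1+2)^2 ≤ 4 * ((m:ℝ)+2)^2 := this
      _ ≤ 4 * (9 * 4^m) := by nlinarith
      _ = 9 * 4^(m+1) := by ring

lemma tail_le {j : ℕ} (hj : j ≤ 1) {x : ℝ} (hx : 1 ≤ x) :
    ∑' n : ℕ, (((n : ℝ) + 1) ^ 2) ^ j * Real.exp (-(Real.pi * x * ((n : ℝ) + 1) ^ 2))
      ≤ Real.exp (-(Real.pi * x)) + 10 * Real.exp (-(Real.pi * x)) ^ 4 := by
  have hx0 : (0:ℝ) < x := by linarith
  set q : ℝ := Real.exp (-(Real.pi * x)) with hqdef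
  have hq0 : 0 < q := Real.exp_pos _
  have hq : q ≤ 1/20 := exp_20 hx
  rw [Summable.tsum_eq_zero_add (summable_tail j hx0)]
  have hhead : ((((0:ℕ):ℝ) + 1) ^ 2) ^ j * Real.exp (-(Real.pi * x * (((0:ℕ):ℝ) + 1) ^ 2)) = q := by
    norm_num
    exact hqdef.symm
  rw [hhead]
  have hre : (∑' n : ℕ, (((((n+1:ℕ)):ℝ) + 1) ^ 2) ^ j *
        Real.exp (-(Real.pi * x * ((((n+1:ℕ)):ℝ) + 1) ^ 2)))
      = ∑' n : ℕ, (((n:ℝ) + 2) ^ 2) ^ j * Real.exp (-(Real.pi * x * ((n:ℝ) + 2) ^ 2)) := by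
    apply tsum_congr
    intro n
    have : (((n+1:ℕ)):ℝ) + 1 = (n:ℝ) + 2 := by push_cast; ring
    rw [this]
  rw [hre]
  have hterm : ∀ n : ℕ, (((n:ℝ) + 2) ^ 2) ^ j *
      Real.exp (-(Real.pi * x * ((n:ℝ) + 2) ^ 2)) ≤ 9 * q^4 * (4 * q^4)^n := by
    intro n
    have hcast : (n:ℝ) + 2 = (((n+2:ℕ)):ℝ) := by push_cast; ring
    have hexp : Real.exp (-(Real.pi * x * ((n:ℝ) + 2) ^ 2)) = q ^ ((n+2)^2) := by
      rw [hcast, exp_sq_eq_pow]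
    have hexp2 : q ^ ((n+2)^2) ≤ q ^ (4*n+4) := by
      apply pow_le_pow_of_le_one hq0.le (by linarith)
      nlinarith
    have hpowj : (((n:ℝ) + 2) ^ 2) ^ j ≤ ((n:ℝ) + 2) ^ 2 := by
      interval_cases j
      · rw [pow_zero]
        nlinarith [Nat.cast_nonneg (α := ℝ) n]
      · rw [pow_one]
    calc (((n:ℝ) + 2) ^ 2) ^ j * Real.exp (-(Real.pi * x * ((n:ℝ) + 2) ^ 2))
        ≤ ((n:ℝ) + 2) ^ 2 * q ^ ((n+2)^2) := by
          rw [hexp]; exact mul_le_mul_of_nonneg_right hpowj (by positivity)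
      _ ≤ (9 * 4^n) * q ^ (4*n+4) := by
          apply mul_le_mul (sq_le_geom n) hexp2 (by positivity) (by positivity)
      _ = 9 * q^4 * (4 * q^4)^n := by
          rw [mul_pow, show 4*n+4 = 4+4*n by ring, pow_add, pow_mul]
          ring
  have hgeom : Summable (fun n : ℕ => 9 * q^4 * (4 * q^4)^n) := by
    apply Summable.mul_left
    apply summable_geometric_of_lt_one (by positivity)
    nlinarith [pow_le_pow_left₀ hq0.le hq 4]
  have hsum2 : Summable (fun n : ℕ => (((n:ℝ) + 2) ^ 2) ^ j *
      Real.exp (-(Real.pi * x * ((n:ℝ) + 2) ^ 2))) := by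
    have h5 := (summable_nat_add_iff 1).mpr (summable_tail j hx0)
    apply h5.congr
    intro n
    have : (((n+1:ℕ)):ℝ) + 1 = (n:ℝ) + 2 := by push_cast; ring
    simp only [this]
  have htail : ∑' n : ℕ, (((n:ℝ) + 2) ^ 2) ^ j *
      Real.exp (-(Real.pi * x * ((n:ℝ) + 2) ^ 2)) ≤ 10 * q^4 := by
    calc ∑' n : ℕ, (((n:ℝ) + 2) ^ 2) ^ j * Real.exp (-(Real.pi * x * ((n:ℝ) + 2) ^ 2))
        ≤ ∑' n : ℕ, 9 * q^4 * (4 * q^4)^n := Summable.tsum_le_tsum hterm hsum2 hgeom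
      _ = 9 * q^4 * (1 - 4*q^4)⁻¹ := by
          rw [tsum_mul_left, tsum_geometric_of_lt_one (by positivity)
            (by nlinarith [pow_le_pow_left₀ hq0.le hq 4])]
      _ ≤ 10 * q^4 := by
          have hq4 : q^4 ≤ (1/20:ℝ)^4 := pow_le_pow_left₀ hq0.le hq 4
          have h1 : (0:ℝ) < 1 - 4*q^4 := by nlinarith
          have h2 : (1 - 4*q^4) * (1 - 4*q^4)⁻¹ = 1 := mul_inv_cancel₀ h1.ne'
          have h3 : (0:ℝ) ≤ (1 - 4*q^4)⁻¹ := by positivity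
          have h5 : (0:ℝ) ≤ 1 - 4*q^4 - 9/10 := by nlinarith
          have h6 : (1 - 4*q^4)⁻¹ ≤ 10/9 := by nlinarith [mul_nonneg h3 h5]
          nlinarith [pow_nonneg hq0.le 4]
  linarith [htail]

lemma tail_nonneg (j : ℕ) (x : ℝ) :
    0 ≤ ∑' n : ℕ, (((n : ℝ) + 1) ^ 2) ^ j * Real.exp (-(Real.pi * x * ((n : ℝ) + 1) ^ 2)) :=
  tsum_nonneg (fun n => by positivity)

lemma S_lower (j : ℕ) {x : ℝ} (hx : 0 < x) :
    2 * Real.exp (-(Real.pi * x)) ≤ S j x := by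
  rw [S_split j hx]
  have h1 : Real.exp (-(Real.pi * x)) ≤ ∑' n : ℕ, (((n : ℝ) + 1) ^ 2) ^ j *
      Real.exp (-(Real.pi * x * ((n : ℝ) + 1) ^ 2)) := by
    have := Summable.le_tsum (summable_tail j hx) 0 (fun m _ => by positivity)
    simpa using this
  have h2 : 0 ≤ ((0:ℝ) ^ 2) ^ j * Real.exp (-(Real.pi * x * 0 ^ 2)) := by positivity
  linarith

lemma S_nonneg (j : ℕ) (x : ℝ) : 0 ≤ S j x :=
  tsum_nonneg (fun k => term_nonneg j x k)

lemma S0_ge_one {x : ℝ} (hx : 0 < x) : 1 ≤ S 0 x := by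
  rw [S_split 0 hx]
  have := tail_nonneg 0 x
  norm_num at this ⊢
  linarith

lemma S1_le {x : ℝ} (hx : 1 ≤ x) :
    S 1 x ≤ 2 * Real.exp (-(Real.pi * x)) + 20 * Real.exp (-(Real.pi * x)) ^ 4 := by
  have hx0 : (0:ℝ) < x := by linarith
  rw [S_split 1 hx0]
  have := tail_le (le_refl 1) hx
  norm_num at this ⊢
  linarith

lemma S0_le {x : ℝ} (hx : 1 ≤ x) :
    S 0 x ≤ 1 + 2 * Real.exp (-(Real.pi * x)) + 20 * Real.exp (-(Real.pi * x)) ^ 4 := by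
  have hx0 : (0:ℝ) < x := by linarith
  rw [S_split 0 hx0]
  have := tail_le (Nat.zero_le 1) hx
  norm_num at this ⊢
  linarith

/-- The key inequality: for `x ≥ 1` the numerator of `H'` is negative. -/
lemma key_ineq {x : ℝ} (hx : 1 ≤ x) :
    S 1 x * S 0 x < Real.pi * x * (S 2 x * S 0 x - S 1 x * S 1 x) := by
  have hx0 : (0:ℝ) < x := by linarith
  set q : ℝ := Real.exp (-(Real.pi * x)) with hqdef
  have hq0 : 0 < q := Real.exp_pos _
  have hq : q ≤ 1/20 := exp_20 hx
  have hq3 : q^3 ≤ (1/20:ℝ)^3 := pow_le_pow_left₀ hq0.le hq 3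
  have hB1 : S 1 x ≤ 21/10 * q := by
    have := S1_le hx
    nlinarith
  have hS1l : 2*q ≤ S 1 x := S_lower 1 hx0
  have hS1n : 0 ≤ S 1 x := S_nonneg 1 x
  have hS0l : 1 ≤ S 0 x := S0_ge_one hx0
  have hS0u : S 0 x ≤ 1 + 21/10 * q := by
    have := S0_le hx
    nlinarith
  have hS2l : 2*q ≤ S 2 x := S_lower 2 hx0
  have hS2S0 : 2*q ≤ S 2 x * S 0 x := by nlinarith
  have hS1sq : S 1 x * S 1 x ≤ (21/10*q)^2 := by nlinarith
  have hπ : 3 ≤ Real.pi * x := by nlinarith [Real.pi_gt_three]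
  have hLHS : S 1 x * S 0 x ≤ 21/10 * q * (1 + 21/10 * q) := by nlinarith
  have hvar : 2*q - (21/10*q)^2 ≤ S 2 x * S 0 x - S 1 x * S 1 x := by linarith
  have hvarpos : (0:ℝ) < 2*q - (21/10*q)^2 := by nlinarith
  have hRHS : 3 * (2*q - (21/10*q)^2) ≤ Real.pi * x * (S 2 x * S 0 x - S 1 x * S 1 x) := by
    have h1 : 3 * (2*q - (21/10*q)^2) ≤ Real.pi * x * (2*q - (21/10*q)^2) :=
      mul_le_mul_of_nonneg_right hπ hvarpos.le
    have h2 : Real.pi * x * (2*q - (21/10*q)^2) ≤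
        Real.pi * x * (S 2 x * S 0 x - S 1 x * S 1 x) :=
      mul_le_mul_of_nonneg_left hvar (by positivity)
    linarith
  nlinarith

lemma hasDerivAt_S (j : ℕ) {x : ℝ} (hx : 0 < x) :
    HasDerivAt (S j) (-Real.pi * S (j+1) x) x := by
  set g : ℤ → ℝ → ℝ := fun k y => ((k:ℝ)^2)^j * Real.exp (-(Real.pi * (k:ℝ)^2) * y) with hgdef
  set g' : ℤ → ℝ → ℝ :=
    fun k y => -(Real.pi * (((k:ℝ)^2)^(j+1) * Real.exp (-(Real.pi * (k:ℝ)^2) * y))) with hg'def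
  have hu : Summable (fun k : ℤ =>
      Real.pi * (((k:ℝ)^2)^(j+1) * Real.exp (-(Real.pi * (x/2) * (k:ℝ)^2)))) :=
    (summable_S (j+1) (half_pos hx)).mul_left Real.pi
  have hg : ∀ (k : ℤ) (y : ℝ), y ∈ Set.Ioi (x/2) → HasDerivAt (g k) (g' k y) y := by
    intro k y _
    have h1 : HasDerivAt (fun y : ℝ => -(Real.pi * (k:ℝ)^2) * y) (-(Real.pi * (k:ℝ)^2)) y := by
      simpa using (hasDerivAt_id y).const_mul (-(Real.pi * (k:ℝ)^2))
    have h3 := (h1.exp).const_mul (((k:ℝ)^2)^j)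
    refine h3.congr_deriv ?_
    simp only [hg'def]
    rw [pow_succ]
    ring
  have hg' : ∀ (k : ℤ) (y : ℝ), y ∈ Set.Ioi (x/2) → ‖g' k y‖ ≤
      Real.pi * (((k:ℝ)^2)^(j+1) * Real.exp (-(Real.pi * (x/2) * (k:ℝ)^2))) := by
    intro k y hy
    rw [hg'def]
    simp only [norm_neg, Real.norm_eq_abs]
    rw [abs_of_nonneg (by positivity)]
    have : Real.exp (-(Real.pi * (k:ℝ)^2) * y) ≤ Real.exp (-(Real.pi * (x/2) * (k:ℝ)^2)) := by
      apply Real.exp_le_exp.mpr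
      have hy' : x/2 ≤ y := le_of_lt hy
      nlinarith [mul_nonneg (mul_nonneg Real.pi_pos.le (sq_nonneg (k:ℝ)))
        (sub_nonneg.mpr hy')]
    exact mul_le_mul_of_nonneg_left
      (mul_le_mul_of_nonneg_left this (pow_nonneg (sq_nonneg _) _)) Real.pi_pos.le
  have hg0 : Summable (fun k : ℤ => g k x) := by
    apply (summable_S j hx).congr
    intro k
    rw [hgdef]
    simp only []
    rw [show -(Real.pi * x * (k:ℝ)^2) = -(Real.pi * (k:ℝ)^2) * x by ring]
  have hx2 : x ∈ Set.Ioi (x/2) := by simp; linarith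
  have hD := hasDerivAt_tsum_of_isPreconnected hu isOpen_Ioi isPreconnected_Ioi
    hg hg' hx2 hg0 hx2
  have hfun : S j = fun z => ∑' k : ℤ, g k z := by
    funext z
    apply tsum_congr
    intro k
    rw [hgdef]
    simp only []
    rw [show -(Real.pi * z * (k:ℝ)^2) = -(Real.pi * (k:ℝ)^2) * z by ring]
  rw [hfun]
  have hval : ∑' k : ℤ, g' k x = -Real.pi * S (j+1) x := by
    rw [hg'def]
    simp only []
    rw [tsum_neg, tsum_mul_left]
    rw [show S (j+1) x = ∑' k : ℤ, ((k:ℝ)^2)^(j+1) * Real.exp (-(Real.pi * (k:ℝ)^2) * x) from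
      tsum_congr (fun k => by rw [show -(Real.pi * x * (k:ℝ)^2) = -(Real.pi * (k:ℝ)^2) * x by ring])]
    ring
  rw [← hval]
  exact hD

lemma S0_pos {x : ℝ} (hx : 0 < x) : 0 < S 0 x := lt_of_lt_of_le one_pos (S0_ge_one hx)

/-- `H x = π x S₁(x) / S₀(x) = -x (log S₀)'(x)`. -/
noncomputable def Hf (x : ℝ) : ℝ := Real.pi * x * S 1 x / S 0 x

lemma hasDerivAt_Hf {x : ℝ} (hx : 0 < x) :
    HasDerivAt Hf (((Real.pi * S 1 x + Real.pi * x * (-Real.pi * S 2 x)) * S 0 x -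
      Real.pi * x * S 1 x * (-Real.pi * S 1 x)) / (S 0 x)^2) x := by
  have hnum : HasDerivAt (fun y => Real.pi * y * S 1 y)
      (Real.pi * S 1 x + Real.pi * x * (-Real.pi * S 2 x)) x := by
    have h1 : HasDerivAt (fun y : ℝ => Real.pi * y) Real.pi x := by
      simpa using (hasDerivAt_id x).const_mul Real.pi
    have := h1.mul (hasDerivAt_S 1 hx)
    exact this.congr_deriv (by ring)
  exact hnum.div (hasDerivAt_S 0 hx) (S0_pos hx).ne'

lemma deriv_Hf_neg {x : ℝ} (hx : 1 ≤ x) : deriv Hf x < 0 := by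
  have hx0 : (0:ℝ) < x := by linarith
  rw [(hasDerivAt_Hf hx0).deriv]
  apply div_neg_of_neg_of_pos
  · have := key_ineq hx
    nlinarith [Real.pi_pos]
  · exact pow_pos (S0_pos hx0) 2

lemma Hf_strictAntiOn : StrictAntiOn Hf (Set.Ici 1) := by
  apply strictAntiOn_of_deriv_neg (convex_Ici 1)
  · intro y hy
    have hy0 : (0:ℝ) < y := lt_of_lt_of_le one_pos hy
    exact (hasDerivAt_Hf hy0).differentiableAt.continuousAt.continuousWithinAt
  · intro y hy
    rw [interior_Ici] at hy
    exact deriv_Hf_neg (le_of_lt hy)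

open Complex in
lemma S0_eq_jacobi {x : ℝ} (hx : 0 < x) :
    (S 0 x : ℂ) = jacobiTheta₂ 0 (x * Complex.I) := by
  rw [S, Complex.ofReal_tsum, jacobiTheta₂]
  apply tsum_congr
  intro k
  rw [jacobiTheta₂_term]
  push_cast
  rw [show 2 * (π:ℂ) * I * k * 0 + π * I * k^2 * (x * I) = ((-(π * x * (k:ℝ)^2) : ℝ) : ℂ) by
    push_cast; rw [show (π:ℂ) * I * k^2 * (x*I) = π * k^2 * x * (I*I) by ring, Complex.I_mul_I]
    ring]
  rw [← Complex.ofReal_exp]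
  norm_num

open Complex in
lemma funEq {x : ℝ} (hx : 0 < x) : S 0 x⁻¹ = Real.sqrt x * S 0 x := by
  have h := jacobiTheta₂_functional_equation 0 ((x:ℂ) * I)
  have hI : ((x:ℂ) * I) ≠ 0 := by
    simp [Complex.ext_iff, hx.ne']
  have h1 : -1 / ((x:ℂ) * I) = ((x⁻¹:ℝ):ℂ) * I := by
    rw [div_eq_iff hI, show ((x⁻¹:ℝ):ℂ) * I * ((x:ℂ) * I) = (((x⁻¹ * x :ℝ)):ℂ) * (I*I) by
      push_cast; ring, inv_mul_cancel₀ hx.ne', Complex.I_mul_I]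
    norm_num
  have h2 : (-I * ((x:ℂ) * I)) = (x:ℂ) := by
    rw [show -I * ((x:ℂ)*I) = -(I*I) * x by ring, Complex.I_mul_I]
    ring
  have h3 : ((x:ℂ)) ^ (1/2 : ℂ) = (Real.sqrt x : ℂ) := by
    rw [Real.sqrt_eq_rpow, Complex.ofReal_cpow hx.le]
    norm_num
  rw [h2, h3, h1] at h
  simp only [zero_pow, mul_zero, zero_div, Complex.exp_zero, mul_one] at h
  rw [← S0_eq_jacobi hx, ← S0_eq_jacobi (inv_pos.mpr hx)] at h
  have hs : (Real.sqrt x : ℂ) ≠ 0 := by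
    simp [Real.sqrt_ne_zero'.mpr hx]
  field_simp at h
  rw [inv_eq_one_div]
  have h' : (Real.sqrt x : ℂ) * (S 0 x : ℂ) = ((S 0 (1/x) : ℝ) : ℂ) := by
    rw [zero_pow two_ne_zero, mul_zero, zero_div, neg_zero, Complex.exp_zero, one_mul] at h
    rw [← h]; ring
  exact_mod_cast h'.symm

lemma Hf_inv {x : ℝ} (hx : 0 < x) : Hf x⁻¹ = 1/2 - Hf x := by
  have hL : HasDerivAt (fun y : ℝ => S 0 y⁻¹) (-Real.pi * S 1 x⁻¹ * (-(x^2)⁻¹)) x :=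
    (hasDerivAt_S 0 (inv_pos.mpr hx)).comp x (hasDerivAt_inv hx.ne')
  have hR : HasDerivAt (fun y : ℝ => Real.sqrt y * S 0 y)
      (1 / (2 * Real.sqrt x) * S 0 x + Real.sqrt x * (-Real.pi * S 1 x)) x :=
    (Real.hasDerivAt_sqrt hx.ne').mul (hasDerivAt_S 0 hx)
  have hEq : (fun y : ℝ => Real.sqrt y * S 0 y) =ᶠ[nhds x] (fun y : ℝ => S 0 y⁻¹) := by
    filter_upwards [Ioi_mem_nhds hx] with y hy
    exact (funEq hy).symm
  have huniq := (hL.congr_of_eventuallyEq hEq).unique hR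
  set A := S 1 x⁻¹ with hA
  set B := S 1 x with hB
  set C := S 0 x with hC
  set r := Real.sqrt x with hrdef
  have hr0 : 0 < r := Real.sqrt_pos.mpr hx
  have hr2 : r^2 = x := Real.sq_sqrt hx.le
  have hS0 : 0 < C := S0_pos hx
  have hx0 : x ≠ 0 := hx.ne'
  have hu : Real.pi * A = r^3 * C / 2 - Real.pi * r^5 * B := by
    have h2r : (2*r) ≠ 0 := by positivity
    apply mul_right_cancel₀ h2r
    have hxr : x^2 = r^4 := by rw [← hr2]; ring
    rw [show -Real.pi * A * (-(x^2)⁻¹) = Real.pi * A * (x^2)⁻¹ by ring, hxr] at huniq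
    have hr4 : (r^4) ≠ 0 := by positivity
    field_simp at huniq
    linear_combination r * huniq
  rw [Hf, Hf, funEq hx, ← hA, ← hB, ← hC, ← hrdef]
  rw [show x = r^2 from hr2.symm]
  have h2 : (r:ℝ) ≠ 0 := hr0.ne'
  have h3 : C ≠ 0 := hS0.ne'
  field_simp
  linear_combination 2 * hu

lemma Hf_one : Hf 1 = 1/4 := by
  have := Hf_inv one_pos
  rw [inv_one] at this
  linarith

lemma Hf_lt {a b : ℝ} (ha : 0 < a) (hab : a < b) : Hf b < Hf a := by
  have hb : 0 < b := lt_trans ha hab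
  rcases le_or_gt 1 a with h1a | h1a
  · exact Hf_strictAntiOn h1a (le_trans h1a hab.le) hab
  rcases le_or_gt b 1 with hb1 | hb1
  · have hbi : 1 ≤ b⁻¹ := by
      rw [← inv_one]
      exact inv_anti₀ hb hb1
    have hinv : b⁻¹ < a⁻¹ := by
      apply inv_strictAnti₀ ha hab
    have h4 : Hf a⁻¹ < Hf b⁻¹ :=
      Hf_strictAntiOn hbi (le_trans hbi hinv.le) hinv
    have ha' := Hf_inv ha
    have hb' := Hf_inv hb
    linarith
  · have hfb : Hf b < Hf 1 := Hf_strictAntiOn (Set.mem_Ici.mpr (le_refl 1)) hb1.le hb1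
    have hai : 1 < a⁻¹ := by
      rw [← inv_one]
      exact inv_strictAnti₀ ha h1a
    have hfai : Hf a⁻¹ < Hf 1 := Hf_strictAntiOn (Set.mem_Ici.mpr (le_refl 1)) hai.le hai
    have := Hf_inv ha
    rw [Hf_one] at hfb hfai
    linarith

/-- `psi s = log S₀(eˢ)`. -/
noncomputable def psi (s : ℝ) : ℝ := Real.log (S 0 (Real.exp s))

lemma hasDerivAt_psi (s : ℝ) : HasDerivAt psi (-(Hf (Real.exp s))) s := by
  have he : (0:ℝ) < Real.exp s := Real.exp_pos s
  have h1 : HasDerivAt (fun u : ℝ => S 0 (Real.exp u))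
      (-Real.pi * S 1 (Real.exp s) * Real.exp s) s :=
    (hasDerivAt_S 0 he).comp s (Real.hasDerivAt_exp s)
  have h2 := h1.log (S0_pos he).ne'
  refine h2.congr_deriv ?_
  rw [Hf]
  field_simp

lemma W_strictMono (s₀ : ℝ) :
    StrictMonoOn (fun d => psi (s₀ + d) + psi (s₀ - d)) (Set.Ici 0) := by
  have hW : ∀ d : ℝ, HasDerivAt (fun d => psi (s₀ + d) + psi (s₀ - d))
      (Hf (Real.exp (s₀ - d)) - Hf (Real.exp (s₀ + d))) d := by
    intro d
    have h1 : HasDerivAt (fun d : ℝ => s₀ + d) 1 d := by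
      simpa using (hasDerivAt_id d).const_add s₀
    have h2 : HasDerivAt (fun d : ℝ => s₀ - d) (-1) d := by
      exact (hasDerivAt_id' d).const_sub s₀
    have h3 := (hasDerivAt_psi (s₀ + d)).comp d h1
    have h4 := (hasDerivAt_psi (s₀ - d)).comp d h2
    have := h3.add h4
    refine this.congr_deriv ?_
    ring
  apply strictMonoOn_of_deriv_pos (convex_Ici 0)
  · intro d _
    exact (hW d).differentiableAt.continuousAt.continuousWithinAt
  · intro d hd
    rw [interior_Ici] at hd
    rw [(hW d).deriv]
    have hlt : Real.exp (s₀ - d) < Real.exp (s₀ + d) := by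
      apply Real.exp_lt_exp.mpr
      linarith [hd.out]
    linarith [Hf_lt (Real.exp_pos (s₀ - d)) hlt]

/-- Main inequality in terms of `S 0`. -/
lemma S0_sq_lt {t d : ℝ} (ht : 0 < t) (hd : d ≠ 0) :
    S 0 t ^ 2 < S 0 (t * Real.exp d) * S 0 (t * Real.exp (-d)) := by
  set s₀ := Real.log t with hs₀
  have hexp : ∀ e : ℝ, Real.exp (s₀ + e) = t * Real.exp e := by
    intro e
    rw [Real.exp_add, Real.exp_log ht]
  have hW := W_strictMono s₀
  have habs : (0:ℝ) < |d| := abs_pos.mpr hd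
  have hkey : psi (s₀ + 0) + psi (s₀ - 0) < psi (s₀ + |d|) + psi (s₀ - |d|) :=
    hW (Set.self_mem_Ici) (Set.mem_Ici.mpr habs.le) habs
  have hsym : psi (s₀ + |d|) + psi (s₀ - |d|) = psi (s₀ + d) + psi (s₀ - d) := by
    rcases abs_cases d with ⟨h, _⟩ | ⟨h, _⟩
    · rw [h]
    · rw [h]
      rw [show s₀ + -d = s₀ - d by ring, show s₀ - -d = s₀ + d by ring]
      ring
  rw [hsym] at hkey
  simp only [add_zero, sub_zero] at hkey
  have e1 : psi s₀ = Real.log (S 0 t) := by rw [psi, Real.exp_log ht]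
  have e2 : psi (s₀ + d) = Real.log (S 0 (t * Real.exp d)) := by
    rw [psi, hexp]
  have e3 : psi (s₀ - d) = Real.log (S 0 (t * Real.exp (-d))) := by
    rw [psi, show s₀ - d = s₀ + (-d) by ring, hexp]
  rw [e1, e2, e3] at hkey
  have p1 : 0 < S 0 t := S0_pos ht
  have p2 : 0 < S 0 (t * Real.exp d) := S0_pos (by positivity)
  have p3 : 0 < S 0 (t * Real.exp (-d)) := S0_pos (by positivity)
  have : Real.log (S 0 t ^ 2) < Real.log (S 0 (t * Real.exp d) * S 0 (t * Real.exp (-d))) := by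
    rw [Real.log_pow, Real.log_mul p2.ne' p3.ne']
    push_cast
    linarith
  exact (Real.log_lt_log_iff (by positivity) (by positivity)).mp this

end Theta3Min

theorem theta3_product_min (α t : ℝ) (hα : 0 < α) (ht : 0 < t) :
    theta3 (Real.exp (-Real.pi * t)) ^ 2 ≤
      theta3 (Real.exp (-Real.pi * t * α^2)) * theta3 (Real.exp (-Real.pi * t * α^(-2:ℤ))) ∧
    (theta3 (Real.exp (-Real.pi * t * α^2)) * theta3 (Real.exp (-Real.pi * t * α^(-2:ℤ))) =
        theta3 (Real.exp (-Real.pi * t)) ^ 2 ↔ α = 1) := by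
  classical
  have ht' : 0 < t := ht
  -- convert theta3 to S 0
  have theta3_eq : ∀ y : ℝ, theta3 (Real.exp (-(Real.pi * y))) = Theta3Min.S 0 y := by
    intro y
    rw [theta3, Theta3Min.S]
    apply tsum_congr
    intro k
    rw [pow_zero, one_mul]
    have h1 : (k^2 : ℤ) = ((k.natAbs ^ 2 : ℕ) : ℤ) := by
      push_cast
      exact (sq_abs k).symm
    rw [h1, zpow_natCast]
    have h2 : ((k.natAbs : ℝ))^2 = (k:ℝ)^2 := by
      rw [Nat.cast_natAbs]
      push_cast
      exact sq_abs _
    rw [← Theta3Min.exp_sq_eq_pow, h2]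
  have hα2 : (0:ℝ) < α^2 := by positivity
  have hzpow : α^(-2:ℤ) = (α^2)⁻¹ := by
    rw [zpow_neg]
    norm_cast
  set d : ℝ := 2 * Real.log α with hd
  have hed : Real.exp d = α^2 := by
    rw [hd, show (2:ℝ) * Real.log α = Real.log α + Real.log α by ring, Real.exp_add,
      Real.exp_log hα]
    ring
  have hend : Real.exp (-d) = (α^2)⁻¹ := by
    rw [Real.exp_neg, hed]
  have eq1 : theta3 (Real.exp (-Real.pi * t * α^2)) = Theta3Min.S 0 (t * Real.exp d) := by
    rw [show -Real.pi * t * α^2 = -(Real.pi * (t * α^2)) by ring, theta3_eq, hed]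
  have eq2 : theta3 (Real.exp (-Real.pi * t * α^(-2:ℤ))) =
      Theta3Min.S 0 (t * Real.exp (-d)) := by
    rw [hzpow, show -Real.pi * t * (α^2)⁻¹ = -(Real.pi * (t * (α^2)⁻¹)) by ring, theta3_eq, hend]
  have eq0 : theta3 (Real.exp (-Real.pi * t)) = Theta3Min.S 0 t := by
    rw [show -Real.pi * t = -(Real.pi * t) by ring, theta3_eq]
  have heqone : α = 1 →
      theta3 (Real.exp (-Real.pi * t * α^2)) * theta3 (Real.exp (-Real.pi * t * α^(-2:ℤ))) =
      theta3 (Real.exp (-Real.pi * t)) ^ 2 := by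
    intro h1
    subst h1
    norm_num
    ring
  have hstrict : α ≠ 1 →
      theta3 (Real.exp (-Real.pi * t)) ^ 2 <
      theta3 (Real.exp (-Real.pi * t * α^2)) * theta3 (Real.exp (-Real.pi * t * α^(-2:ℤ))) := by
    intro hne
    have hdne : d ≠ 0 := by
      rw [hd]
      intro h
      have : Real.log α = 0 := by linarith
      rcases Real.log_eq_zero.mp this with h | h | h
      · exact absurd h hα.ne'
      · exact hne h
      · nlinarith
    rw [eq0, eq1, eq2]
    exact Theta3Min.S0_sq_lt ht hdne
  constructor
  · by_cases h1 : α = 1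
    · exact le_of_eq (heqone h1).symm
    · exact le_of_lt (hstrict h1)
  · constructor
    · intro heq
      by_contra hne
      have := hstrict hne
      linarith
    · exact heqone
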